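/- Let p = p_1 + p_2 with p_1, p_2 ≥ 1. Consider control units i = 1, …, N with true covariates z_i ∈ ℝ^p, each having m_i ≥ 2 replicated measurements z*_{i,j} ∈ ℝ^p (j = 1, …, m_i) whose last p_2 coordinates are error-free: z*_{i,j,k} = z_{i,k} for every k > p_1. Consider treated units l = 1, …, N_1 with true covariates y_l ∈ ℝ^p, each having m'_l ≥ 1 replicated measurements y*_{l,j} whose last p_2 coordinates satisfy y*_{l,j,k} = y_{l,k} for k > p_1. Define B_HW(θ) = [Σ_{i=1}^N (m_i(m_i−1))^{-1} Σ_{1 ≤ j ≠ k ≤ m_i} exp⟨θ, z*_{i,j}⟩ z*_{i,k}] / [Σ_{i=1}^N m_i^{-1} Σ_{j=1}^{m_i} exp⟨θ, z*_{i,j}⟩] − N_1^{-1} Σ_{l=1}^{N_1} (m'_l)^{-1} Σ_{j=1}^{m'_l} y*_{l,j}. If θ̂ ∈ ℝ^p satisfies B_HW(θ̂) = 0, then the weights ŵ_{c,i} = [m_i^{-1} Σ_{j=1}^{m_i} exp⟨θ̂, z*_{i,j}⟩] / [Σ_{i'=1}^N m_{i'}^{-1} Σ_{j=1}^{m_{i'}}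 exp⟨θ̂, z*_{i',j}⟩] satisfy, for every coordinate k > p_1: Σ_{i=1}^N ŵ_{c,i} z_{i,k} = N_1^{-1} Σ_{l=1}^{N_1} y_{l,k}. -/

import Mathlib

open scoped RealInnerProductSpace BigOperators

/-- CEB-HW part of Theorem 7: With replicated measurements whose last `p₂`
coordinates are error-free, if `θ̂` solves the Huang–Wang corrected estimating equation
`B_HW(θ̂) = 0`, then the CEB-HW weights exactly balance the true covariates in every
coordinate `k > p₁`: `∑ i, ŵ_{c,i} z_{i,k} = N₁⁻¹ ∑ l, y_{l,k}`. -/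
theorem ceb_hw_balances_error_free_coordinates
    (p1 p2 N N1 : ℕ) (hp1 : 1 ≤ p1) (hp2 : 1 ≤ p2) (hN : 1 ≤ N) (hN1 : 1 ≤ N1)
    (m : Fin N → ℕ) (hm : ∀ i, 2 ≤ m i)
    (m' : Fin N1 → ℕ) (hm' : ∀ l, 1 ≤ m' l)
    (z : Fin N → EuclideanSpace ℝ (Fin (p1 + p2)))
    (zstar : (i : Fin N) → Fin (m i) → EuclideanSpace ℝ (Fin (p1 + p2)))
    (hz : ∀ i j (k : Fin (p1 + p2)), p1 ≤ (k : ℕ) → zstar i j k = z i k)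
    (y : Fin N1 → EuclideanSpace ℝ (Fin (p1 + p2)))
    (ystar : (l : Fin N1) → Fin (m' l) → EuclideanSpace ℝ (Fin (p1 + p2)))
    (hy : ∀ l j (k : Fin (p1 + p2)), p1 ≤ (k : ℕ) → ystar l j k = y l k)
    (θhat : EuclideanSpace ℝ (Fin (p1 + p2)))
    (hroot :
      (∑ i, (m i : ℝ)⁻¹ * ∑ j, Real.exp ⟪θhat, zstar i j⟫)⁻¹ •
          (∑ i, ((m i : ℝ) * ((m i : ℝ) - 1))⁻¹ •
            ∑ j, ∑ k, if j ≠ k then Real.exp ⟪θhat, zstar i j⟫ • zstar i k else 0)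
        - (N1 : ℝ)⁻¹ • ∑ l, (m' l : ℝ)⁻¹ • ∑ j, ystar l j = 0)
    (w : Fin N → ℝ)
    (hw : ∀ i, w i = ((m i : ℝ)⁻¹ * ∑ j, Real.exp ⟪θhat, zstar i j⟫)
        / ∑ i', (m i' : ℝ)⁻¹ * ∑ j, Real.exp ⟪θhat, zstar i' j⟫) :
    ∀ k : Fin (p1 + p2), p1 ≤ (k : ℕ) →
      ∑ i, w i * z i k = (N1 : ℝ)⁻¹ * ∑ l, y l k := by
  intro k hk
  have hne : ∀ (n : ℕ) (j : Fin n) (c : ℝ),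
      ∑ k' : Fin n, (if j ≠ k' then c else 0) = ((n : ℝ) - 1) * c := by
    intro n j c
    have h1 : ∑ k' : Fin n, (if j ≠ k' then c else 0)
        = ∑ k' : Fin n, (c - if j = k' then c else 0) := by
      apply Finset.sum_congr rfl
      intro x _
      by_cases h : j = x <;> simp [h]
    rw [h1, Finset.sum_sub_distrib, Finset.sum_const, Finset.sum_ite_eq]
    simp [mul_comm, sub_mul]
    ring
  have hsum : ∀ {ι : Type} (s : Finset ι) (f : ι → EuclideanSpace ℝ (Fin (p1 + p2))),
      (∑ x ∈ s, f x) k = ∑ x ∈ s, f x k := fun s f => by simp [WithLp.ofLp_sum]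
  have h := congrArg (fun v : EuclideanSpace ℝ (Fin (p1 + p2)) => v k) hroot
  simp only [EuclideanSpace, PiLp.sub_apply, PiLp.smul_apply, PiLp.zero_apply, hsum,
    smul_eq_mul, apply_ite (fun v : EuclideanSpace ℝ (Fin (p1 + p2)) => v k)] at h
  have htreat : ∀ l, (∑ j : Fin (m' l), ystar l j k) = (m' l : ℝ) * y l k := by
    intro l
    rw [Finset.sum_congr rfl fun j _ => hy l j k hk]
    simp [mul_comm]
  have hctrl : ∀ i, ((m i : ℝ) * ((m i : ℝ) - 1))⁻¹ *
      (∑ j : Fin (m i), ∑ k' : Fin (m i),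
        if j ≠ k' then Real.exp ⟪θhat, zstar i j⟫ * zstar i k' k else 0)
      = (m i : ℝ)⁻¹ * (∑ j, Real.exp ⟪θhat, zstar i j⟫) * z i k := by
    intro i
    have hm0 : (m i : ℝ) ≠ 0 := by
      have := hm i; positivity
    have hm1 : (m i : ℝ) - 1 ≠ 0 := by
      have := hm i
      have : (2 : ℝ) ≤ (m i : ℝ) := by exact_mod_cast this
      linarith
    have h1 : ∀ j : Fin (m i), (∑ k' : Fin (m i),
        if j ≠ k' then Real.exp ⟪θhat, zstar i j⟫ * zstar i k' k else 0)
        = ((m i : ℝ) - 1) * (Real.exp ⟪θhat, zstar i j⟫ * z i k) := by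
      intro j
      rw [Finset.sum_congr rfl fun k' _ => by rw [hz i k' k hk]]
      exact hne _ _ _
    rw [Finset.sum_congr rfl fun j _ => h1 j, ← Finset.mul_sum, ← Finset.sum_mul]
    field_simp
  rw [Finset.sum_congr rfl fun i _ => hctrl i] at h
  have htreat2 : ∀ l : Fin N1, (m' l : ℝ)⁻¹ * ((m' l : ℝ) * y l k) = y l k := by
    intro l
    have hm0 : (m' l : ℝ) ≠ 0 := by
      have := hm' l; positivity
    field_simp
  simp only [htreat, htreat2] at h
  have hgoal : ∑ i, w i * z i k
      = (∑ i', (m i' : ℝ)⁻¹ * ∑ j, Real.exp ⟪θhat, zstar i' j⟫)⁻¹ *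
        ∑ i, (m i : ℝ)⁻¹ * (∑ j, Real.exp ⟪θhat, zstar i j⟫) * z i k := by
    rw [Finset.mul_sum]
    apply Finset.sum_congr rfl
    intro i _
    rw [hw i, div_eq_mul_inv]
    ring
  rw [hgoal]
  linarith [h]
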